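/- Let δ ∈ (0,1) and let {ε_t}_{t≥0} and {e_t}_{t≥0} be sequences of nonnegative reals such that ε_t ≤ δ^t ε_0 + Σ_{τ=0}^{t-1} δ^{t-τ-1} e_τ for all t ≥ 0. Then for all t ≥ 1, Σ_{τ=1}^{t} ε_τ² ≤ (2/(1-δ)²) Σ_{τ=0}^{t-1} e_τ² + (2/(1-δ²)) ε_0². -/

import Mathlib

open Finset

theorem stmt_0 (δ : ℝ) (hδ : δ ∈ Set.Ioo (0:ℝ) 1)
    (ε e : ℕ → ℝ) (hε : ∀ t, 0 ≤ ε t) (he : ∀ t, 0 ≤ e t)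
    (hrec : ∀ t, ε t ≤ δ ^ t * ε 0 + ∑ τ ∈ Finset.range t, δ ^ (t - τ - 1) * e τ) :
    ∀ t ≥ 1, ∑ τ ∈ Finset.Icc 1 t, (ε τ) ^ 2 ≤
      2 / (1 - δ) ^ 2 * ∑ τ ∈ Finset.range t, (e τ) ^ 2 + 2 / (1 - δ ^ 2) * (ε 0) ^ 2 := by
  obtain ⟨hδ0, hδ1⟩ := hδ
  have h1δ : (0:ℝ) < 1 - δ := by linarith
  have h1δ2 : (0:ℝ) < 1 - δ ^ 2 := by nlinarith
  have hδle : 0 ≤ δ := le_of_lt hδ0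
  -- geometric sum bound
  have hgeom : ∀ (x : ℝ), 0 ≤ x → x < 1 → ∀ n : ℕ, ∑ i ∈ range n, x ^ i ≤ 1 / (1 - x) := by
    intro x hx0 hx1 n
    have h1x : (0:ℝ) < 1 - x := by linarith
    have hm := geom_sum_mul x n
    have hpn : (0:ℝ) ≤ x ^ n := pow_nonneg hx0 n
    rw [le_div_iff₀ h1x]
    nlinarith
  -- weight sum bound for the convolution
  have hweight : ∀ τ : ℕ, ∑ j ∈ range τ, δ ^ (τ - j - 1) ≤ 1 / (1 - δ) := by
    intro τ
    have : ∑ j ∈ range τ, δ ^ (τ - j - 1) = ∑ j ∈ range τ, δ ^ j := by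
      rw [← sum_range_reflect (fun j => δ ^ j) τ]
      refine Finset.sum_congr rfl fun j hj => ?_
      congr 1
      omega
    rw [this]
    exact hgeom δ hδle hδ1 τ
  -- abbreviation
  set S : ℕ → ℝ := fun τ => ∑ j ∈ range τ, δ ^ (τ - j - 1) * e j with hS
  have hSnonneg : ∀ τ, 0 ≤ S τ :=
    fun τ => Finset.sum_nonneg fun j _ => mul_nonneg (pow_nonneg hδle _) (he j)
  -- Cauchy-Schwarz: S τ ^ 2 ≤ (1/(1-δ)) * ∑ δ^(τ-j-1) e j ^ 2
  have hCS : ∀ τ : ℕ, S τ ^ 2 ≤ (1 / (1 - δ)) * ∑ j ∈ range τ, δ ^ (τ - j - 1) * (e j) ^ 2 := by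
    intro τ
    have key := Finset.sum_mul_sq_le_sq_mul_sq (range τ)
      (fun j => Real.sqrt (δ ^ (τ - j - 1)))
      (fun j => Real.sqrt (δ ^ (τ - j - 1)) * e j)
    have h1 : ∀ j ∈ range τ, Real.sqrt (δ ^ (τ - j - 1)) *
        (Real.sqrt (δ ^ (τ - j - 1)) * e j) = δ ^ (τ - j - 1) * e j := by
      intro j _
      rw [← mul_assoc, Real.mul_self_sqrt (pow_nonneg hδle _)]
    have h2 : ∀ j ∈ range τ, Real.sqrt (δ ^ (τ - j - 1)) ^ 2 = δ ^ (τ - j - 1) := by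
      intro j _
      exact Real.sq_sqrt (pow_nonneg hδle _)
    have h3 : ∀ j ∈ range τ, (Real.sqrt (δ ^ (τ - j - 1)) * e j) ^ 2
        = δ ^ (τ - j - 1) * (e j) ^ 2 := by
      intro j _
      rw [mul_pow, Real.sq_sqrt (pow_nonneg hδle _)]
    rw [Finset.sum_congr rfl h1, Finset.sum_congr rfl h2, Finset.sum_congr rfl h3] at key
    calc S τ ^ 2 ≤ (∑ j ∈ range τ, δ ^ (τ - j - 1)) *
          ∑ j ∈ range τ, δ ^ (τ - j - 1) * (e j) ^ 2 := key
      _ ≤ (1 / (1 - δ)) * ∑ j ∈ range τ, δ ^ (τ - j - 1) * (e j) ^ 2 := by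
          apply mul_le_mul_of_nonneg_right (hweight τ)
          exact Finset.sum_nonneg fun j _ => mul_nonneg (pow_nonneg hδle _) (sq_nonneg _)
  intro t ht
  -- pointwise bound on ε τ ^ 2
  have hpt : ∀ τ : ℕ, (ε τ) ^ 2 ≤ 2 * (δ ^ 2) ^ τ * (ε 0) ^ 2 + 2 * S τ ^ 2 := by
    intro τ
    have h := hrec τ
    have ha : 0 ≤ δ ^ τ * ε 0 := mul_nonneg (pow_nonneg hδle _) (hε 0)
    have hsq : (ε τ) ^ 2 ≤ (δ ^ τ * ε 0 + S τ) ^ 2 := by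
      apply pow_le_pow_left₀ (hε τ) h
    have hexp : (δ ^ 2) ^ τ = (δ ^ τ) ^ 2 := by ring
    nlinarith [sq_nonneg (δ ^ τ * ε 0 - S τ)]
  calc ∑ τ ∈ Finset.Icc 1 t, (ε τ) ^ 2
      ≤ ∑ τ ∈ Finset.Icc 1 t, (2 * (δ ^ 2) ^ τ * (ε 0) ^ 2 + 2 * S τ ^ 2) :=
        Finset.sum_le_sum fun τ _ => hpt τ
    _ = 2 * (ε 0) ^ 2 * (∑ τ ∈ Finset.Icc 1 t, (δ ^ 2) ^ τ)
        + 2 * ∑ τ ∈ Finset.Icc 1 t, S τ ^ 2 := by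
        rw [Finset.sum_add_distrib, Finset.mul_sum, Finset.mul_sum]
        congr 1
        · exact Finset.sum_congr rfl fun τ _ => by ring
    _ ≤ 2 * (ε 0) ^ 2 * (1 / (1 - δ ^ 2))
        + 2 * ((1 / (1 - δ)) ^ 2 * ∑ j ∈ range t, (e j) ^ 2) := by
        apply add_le_add
        · apply mul_le_mul_of_nonneg_left _ (by positivity)
          -- geometric bound over Icc 1 t
          calc ∑ τ ∈ Finset.Icc 1 t, (δ ^ 2) ^ τ
              ≤ ∑ τ ∈ Finset.range (t + 1), (δ ^ 2) ^ τ := by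
                apply Finset.sum_le_sum_of_subset_of_nonneg
                · intro x hx
                  simp only [Finset.mem_Icc] at hx
                  simp only [Finset.mem_range]
                  omega
                · intro i _ _
                  positivity
            _ ≤ 1 / (1 - δ ^ 2) := hgeom (δ ^ 2) (by positivity) (by nlinarith) (t + 1)
        · apply mul_le_mul_of_nonneg_left _ (by norm_num)
          -- the convolution double-sum bound
          calc ∑ τ ∈ Finset.Icc 1 t, S τ ^ 2
              ≤ ∑ τ ∈ Finset.Icc 1 t,
                  (1 / (1 - δ)) * ∑ j ∈ range τ, δ ^ (τ - j - 1) * (e j) ^ 2 :=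
                Finset.sum_le_sum fun τ _ => hCS τ
            _ = (1 / (1 - δ)) * ∑ τ ∈ Finset.Icc 1 t,
                  ∑ j ∈ range τ, δ ^ (τ - j - 1) * (e j) ^ 2 := by
                rw [Finset.mul_sum]
            _ = (1 / (1 - δ)) * ∑ j ∈ range t,
                  ∑ τ ∈ Finset.Icc (j + 1) t, δ ^ (τ - j - 1) * (e j) ^ 2 := by
                congr 1
                apply Finset.sum_comm'
                intro τ j
                simp only [Finset.mem_Icc, Finset.mem_range]
                omega
            _ ≤ (1 / (1 - δ)) * ∑ j ∈ range t, (1 / (1 - δ)) * (e j) ^ 2 := by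
                apply mul_le_mul_of_nonneg_left _ (by positivity)
                apply Finset.sum_le_sum
                intro j hj
                have : ∑ τ ∈ Finset.Icc (j + 1) t, δ ^ (τ - j - 1) * (e j) ^ 2
                    = (∑ τ ∈ Finset.Icc (j + 1) t, δ ^ (τ - j - 1)) * (e j) ^ 2 := by
                  rw [Finset.sum_mul]
                rw [this]
                apply mul_le_mul_of_nonneg_right _ (sq_nonneg _)
                -- reindex Icc (j+1) t
                have hsub : Finset.Icc (j + 1) t ⊆ Finset.range (t + 1) := by
                  intro x hx
                  simp only [Finset.mem_Icc] at hx
                  simp only [Finset.mem_range]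
                  omega
                have himg : ∑ τ ∈ Finset.Icc (j + 1) t, δ ^ (τ - j - 1)
                    = ∑ k ∈ (Finset.Icc (j + 1) t).image (fun τ => τ - j - 1), δ ^ k := by
                  rw [Finset.sum_image]
                  intro a ha b hb hab
                  simp only [Finset.mem_coe, Finset.mem_Icc] at ha hb hab
                  omega
                rw [himg]
                refine le_trans (Finset.sum_le_sum_of_subset_of_nonneg ?_ ?_)
                  (hgeom δ hδle hδ1 (t + 1))
                · intro k hk
                  simp only [Finset.mem_image, Finset.mem_Icc] at hk
                  simp only [Finset.mem_range]
                  omega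
                · intro i _ _
                  positivity
            _ = (1 / (1 - δ)) ^ 2 * ∑ j ∈ range t, (e j) ^ 2 := by
                rw [Finset.mul_sum, Finset.mul_sum]
                exact Finset.sum_congr rfl fun j _ => by ring
    _ ≤ 2 / (1 - δ) ^ 2 * ∑ τ ∈ Finset.range t, (e τ) ^ 2 + 2 / (1 - δ ^ 2) * (ε 0) ^ 2 := by
        have h1 : 2 * ((1 / (1 - δ)) ^ 2 * ∑ j ∈ range t, (e j) ^ 2)
            = 2 / (1 - δ) ^ 2 * ∑ τ ∈ Finset.range t, (e τ) ^ 2 := by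
          field_simp
        have h2 : 2 * (ε 0) ^ 2 * (1 / (1 - δ ^ 2)) = 2 / (1 - δ ^ 2) * (ε 0) ^ 2 := by
          ring
        rw [h1, h2]
        linarith
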